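/- Let M, N be positive integers, let L₁, A₁ : ℝ → Matrix (Fin M) (Fin M) ℝ and L₂, A₂ : ℝ → Matrix (Fin N) (Fin N) ℝ be time-dependent matrices such that L₁ and L₂ are differentiable and satisfy the Lax equations L₁'(t) = [A₁(t), L₁(t)] and L₂'(t) = [A₂(t), L₂(t)] for all t (i.e. for every t, L₁ has derivative [A₁(t), L₁(t)] at t, and similarly for L₂). Let α₁, α₂ : ℝ be arbitrary constants and define L₃(t) = α₁ (L₁(t) ⊗ L₂(t)) + α₂ (L₁(t) ⊗ I_N + I_M ⊗ L₂(t)) and A₃(t) = A₁(t) ⊗ I_N + I_M ⊗ A₂(t). Then L₃ satisfies the Lax equation L₃'(t) = [A₃(t), L₃(t)] for all t. -/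

import Mathlib

open Matrix Kronecker

lemma kron_lax_alg {M N : ℕ} (A L : Matrix (Fin M) (Fin M) ℝ)
    (B K : Matrix (Fin N) (Fin N) ℝ) (α₁ α₂ : ℝ) :
    (A ⊗ₖ (1 : Matrix (Fin N) (Fin N) ℝ) + (1 : Matrix (Fin M) (Fin M) ℝ) ⊗ₖ B) *
      (α₁ • (L ⊗ₖ K) + α₂ • (L ⊗ₖ (1 : Matrix (Fin N) (Fin N) ℝ) +
        (1 : Matrix (Fin M) (Fin M) ℝ) ⊗ₖ K)) -
    (α₁ • (L ⊗ₖ K) + α₂ • (L ⊗ₖ (1 : Matrix (Fin N) (Fin N) ℝ) +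
        (1 : Matrix (Fin M) (Fin M) ℝ) ⊗ₖ K)) *
      (A ⊗ₖ (1 : Matrix (Fin N) (Fin N) ℝ) + (1 : Matrix (Fin M) (Fin M) ℝ) ⊗ₖ B) =
    α₁ • ((A * L - L * A) ⊗ₖ K + L ⊗ₖ (B * K - K * B)) +
    α₂ • ((A * L - L * A) ⊗ₖ (1 : Matrix (Fin N) (Fin N) ℝ) +
      (1 : Matrix (Fin M) (Fin M) ℝ) ⊗ₖ (B * K - K * B)) := by
  simp only [mul_add, add_mul, mul_smul_comm, smul_mul_assoc,
    ← Matrix.mul_kronecker_mul, one_mul, mul_one]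
  ext ⟨i₁, i₂⟩ ⟨j₁, j₂⟩
  simp [Matrix.add_apply, Matrix.sub_apply, Matrix.smul_apply,
    Matrix.kroneckerMap_apply, smul_eq_mul]
  ring

theorem kronecker_lax_representation
    (M N : ℕ) (hM : 0 < M) (hN : 0 < N)
    (L₁ A₁ : ℝ → Matrix (Fin M) (Fin M) ℝ)
    (L₂ A₂ : ℝ → Matrix (Fin N) (Fin N) ℝ)
    (h₁ : ∀ t : ℝ, ∀ i j : Fin M,
      HasDerivAt (fun s => L₁ s i j) ((A₁ t * L₁ t - L₁ t * A₁ t) i j) t)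
    (h₂ : ∀ t : ℝ, ∀ i j : Fin N,
      HasDerivAt (fun s => L₂ s i j) ((A₂ t * L₂ t - L₂ t * A₂ t) i j) t)
    (α₁ α₂ : ℝ)
    (L₃ A₃ : ℝ → Matrix (Fin M × Fin N) (Fin M × Fin N) ℝ)
    (hL₃ : ∀ t : ℝ, L₃ t =
      α₁ • (L₁ t ⊗ₖ L₂ t) +
      α₂ • (L₁ t ⊗ₖ (1 : Matrix (Fin N) (Fin N) ℝ) +
            (1 : Matrix (Fin M) (Fin M) ℝ) ⊗ₖ L₂ t))
    (hA₃ : ∀ t : ℝ, A₃ t =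
      A₁ t ⊗ₖ (1 : Matrix (Fin N) (Fin N) ℝ) +
      (1 : Matrix (Fin M) (Fin M) ℝ) ⊗ₖ A₂ t) :
    ∀ t : ℝ, ∀ i j : Fin M × Fin N,
      HasDerivAt (fun s => L₃ s i j) ((A₃ t * L₃ t - L₃ t * A₃ t) i j) t := by
  intro t i j
  have key : A₃ t * L₃ t - L₃ t * A₃ t =
      α₁ • ((A₁ t * L₁ t - L₁ t * A₁ t) ⊗ₖ L₂ t +
            L₁ t ⊗ₖ (A₂ t * L₂ t - L₂ t * A₂ t)) +
      α₂ • ((A₁ t * L₁ t - L₁ t * A₁ t) ⊗ₖ (1 : Matrix (Fin N) (Fin N) ℝ) +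
            (1 : Matrix (Fin M) (Fin M) ℝ) ⊗ₖ (A₂ t * L₂ t - L₂ t * A₂ t)) := by
    rw [hL₃, hA₃]; exact kron_lax_alg _ _ _ _ _ _
  rw [key]
  have hfun : (fun s => L₃ s i j) = fun s =>
      α₁ * (L₁ s i.1 j.1 * L₂ s i.2 j.2) +
      α₂ * (L₁ s i.1 j.1 * (1 : Matrix (Fin N) (Fin N) ℝ) i.2 j.2 +
            (1 : Matrix (Fin M) (Fin M) ℝ) i.1 j.1 * L₂ s i.2 j.2) := by
    funext s
    simp [hL₃ s, Matrix.add_apply, Matrix.smul_apply, Matrix.kroneckerMap_apply,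
      smul_eq_mul, mul_add]
  rw [hfun]
  have hd := (((h₁ t i.1 j.1).mul (h₂ t i.2 j.2)).const_mul α₁).add
    ((((h₁ t i.1 j.1).mul_const ((1 : Matrix (Fin N) (Fin N) ℝ) i.2 j.2)).add
      ((h₂ t i.2 j.2).const_mul ((1 : Matrix (Fin M) (Fin M) ℝ) i.1 j.1))).const_mul α₂)
  convert hd using 1
  all_goals rfl
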